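/- arXiv:math/0310063 — 5 statements merged into one kernel-verified Lean document; each statement's English description precedes it below -/
import Mathlib

section
/- Let m, n be natural numbers with m − n even and m − n > 0, and let α be an even natural number with α ≤ m + n − 2. Then ∫∫_{0≤y≤x≤1} (x−y)^α p_m(x) p_n(y) dy dx = 0. -/
open MeasureTheory intervalIntegral Polynomial

/-- Shifted Legendre polynomial `p n x = (1/n!) dⁿ/dxⁿ (xⁿ(x-1)ⁿ)`. -/
noncomputable def shiftedLegendre (n : ℕ) : ℝ → ℝ :=
  fun x => (1 / (Nat.factorial n) : ℝ) * iteratedDeriv n (fun t : ℝ => t ^ n * (t - 1) ^ n) x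

/-- Pochhammer symbol `(a)_k = a(a+1)⋯(a+k-1)`. -/
noncomputable def poch (a : ℝ) (k : ℕ) : ℝ := ∏ i ∈ Finset.range k, (a + i)

namespace SL9

noncomputable def P (m : ℕ) : ℝ[X] := X ^ m * (X - 1) ^ m

lemma iteratedDeriv_eval (k : ℕ) (p : ℝ[X]) :
    iteratedDeriv k (fun x => p.eval x) = fun x => (derivative^[k] p).eval x := by
  induction k generalizing p with
  | zero => simp
  | succ k ih =>
    have hd : (deriv fun x => p.eval x) = fun x => (derivative p).eval x :=
      funext fun x => Polynomial.deriv p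
    rw [iteratedDeriv_succ', hd, ih, Function.iterate_succ_apply]

lemma shiftedLegendre_eq (m : ℕ) (x : ℝ) :
    shiftedLegendre m x = (1 / (Nat.factorial m) : ℝ) * (derivative^[m] (P m)).eval x := by
  unfold _root_.shiftedLegendre
  have h : (fun t : ℝ => t ^ m * (t - 1) ^ m) = fun t => (P m).eval t := by
    funext t; simp [P]
  rw [h, iteratedDeriv_eval]

lemma eval_boundary (m k : ℕ) (hk : k < m) :
    (derivative^[k] (P m)).eval 0 = 0 ∧ (derivative^[k] (P m)).eval 1 = 0 := by
  constructor
  · obtain ⟨q, hq⟩ := Polynomial.pow_sub_dvd_iterate_derivative_of_pow_dvd (q := (X : ℝ[X]))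
      (p := P m) (n := m) k ⟨(X - 1) ^ m, rfl⟩
    rw [hq]
    simp [pow_eq_zero_iff, Nat.sub_ne_zero_of_lt hk]
  · obtain ⟨q, hq⟩ := Polynomial.pow_sub_dvd_iterate_derivative_of_pow_dvd (q := (X - 1 : ℝ[X]))
      (p := P m) (n := m) k ⟨X ^ m, mul_comm _ _⟩
    rw [hq]
    simp [pow_eq_zero_iff, Nat.sub_ne_zero_of_lt hk]

end SL9

namespace SL9

lemma ibp_step (u v : ℝ[X]) (h0 : v.eval 0 = 0) (h1 : v.eval 1 = 0) :
    ∫ x in (0:ℝ)..1, u.eval x * (derivative v).eval x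
      = - ∫ x in (0:ℝ)..1, (derivative u).eval x * v.eval x := by
  have H := intervalIntegral.integral_mul_deriv_eq_deriv_mul
    (u := fun x => u.eval x) (v := fun x => v.eval x)
    (u' := fun x => (derivative u).eval x) (v' := fun x => (derivative v).eval x)
    (fun x _ => u.hasDerivAt x) (fun x _ => v.hasDerivAt x)
    ((u.derivative.continuous_aeval).intervalIntegrable 0 1)
    ((v.derivative.continuous_aeval).intervalIntegrable 0 1)
  rw [h0, h1] at H
  simp only [mul_zero, zero_sub, zero_mul, sub_zero] at H
  simpa using H

lemma ibp (m : ℕ) (u : ℝ[X]) (k : ℕ) (hk : k ≤ m) :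
    ∫ x in (0:ℝ)..1, u.eval x * (derivative^[m] (P m)).eval x
      = (-1 : ℝ) ^ k * ∫ x in (0:ℝ)..1,
          (derivative^[k] u).eval x * (derivative^[m - k] (P m)).eval x := by
  induction k with
  | zero => simp
  | succ k ih =>
    rw [ih (Nat.le_of_succ_le hk)]
    have h1 : m - k = (m - (k + 1)) + 1 := by omega
    have hb := eval_boundary m (m - (k + 1)) (by omega)
    rw [h1, Function.iterate_succ_apply',
      ibp_step (derivative^[k] u) (derivative^[m - (k + 1)] (P m)) hb.1 hb.2,
      ← Function.iterate_succ_apply' derivative k u]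
    rw [pow_succ]
    ring

lemma orth (m j : ℕ) (h : j < m) :
    ∫ x in (0:ℝ)..1, x ^ j * shiftedLegendre m x = 0 := by
  have hre : ∀ x : ℝ, x ^ j * shiftedLegendre m x
      = (1 / (Nat.factorial m) : ℝ) * (((X : ℝ[X]) ^ j).eval x * (derivative^[m] (P m)).eval x) := by
    intro x
    rw [shiftedLegendre_eq]
    simp
    ring
  simp_rw [hre]
  rw [intervalIntegral.integral_const_mul]
  have h2 := ibp m (X ^ j) (j + 1) h
  have h3 : derivative^[j + 1] ((X : ℝ[X]) ^ j) = 0 :=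
    Polynomial.iterate_derivative_eq_zero (by simp)
  rw [h3] at h2
  simp at h2
  simp only [Polynomial.eval_pow, Polynomial.eval_X] at h2 ⊢
  rw [h2]
  simp

end SL9

namespace SL9

lemma comp_symm (m : ℕ) : (P m).comp (1 - X) = P m := by
  unfold P
  rw [Polynomial.mul_comp, Polynomial.pow_comp, Polynomial.pow_comp,
    Polynomial.X_comp, Polynomial.sub_comp, Polynomial.X_comp, Polynomial.one_comp]
  rw [← mul_pow, ← mul_pow]
  congr 1
  ring

lemma iterate_deriv_comp (p : ℝ[X]) (k : ℕ) :
    derivative^[k] (p.comp (1 - X)) = (-1) ^ k * (derivative^[k] p).comp (1 - X) := by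
  induction k generalizing p with
  | zero => simp
  | succ k ih =>
    rw [Function.iterate_succ_apply, Polynomial.derivative_comp]
    have h : derivative ((1 : ℝ[X]) - X) = -1 := by simp
    have h2 : derivative ((1 : ℝ[X]) - X) * (derivative p).comp (1 - X)
        = (-(derivative p)).comp (1 - X) := by
      rw [h, Polynomial.neg_comp]; ring
    rw [h2, ih, Polynomial.iterate_derivative_neg, Polynomial.neg_comp,
      ← Function.iterate_succ_apply]
    ring

lemma legendre_symm (m : ℕ) (x : ℝ) :
    shiftedLegendre m (1 - x) = (-1 : ℝ) ^ m * shiftedLegendre m x := by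
  rw [shiftedLegendre_eq, shiftedLegendre_eq]
  have key : derivative^[m] (P m) = (-1) ^ m * (derivative^[m] (P m)).comp (1 - X) := by
    conv_lhs => rw [← comp_symm m]
    exact iterate_deriv_comp (P m) m
  have h1 : (derivative^[m] (P m)).eval (1 - x)
      = ((derivative^[m] (P m)).comp (1 - X)).eval x := by
    simp [Polynomial.eval_comp]
  rw [h1]
  have hone : ((-1 : ℝ[X]) ^ m) * ((-1) ^ m) = 1 := by
    rw [← pow_add]; exact Even.neg_one_pow ⟨m, rfl⟩
  have h3 : ((derivative^[m] (P m)).comp (1 - X)) = (-1) ^ m * derivative^[m] (P m) := by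
    conv_rhs => rw [key]
    rw [← mul_assoc, hone, one_mul]
  rw [h3, Polynomial.eval_mul]
  simp only [Polynomial.eval_pow, Polynomial.eval_neg, Polynomial.eval_one]
  ring

lemma continuous_shiftedLegendre (m : ℕ) : Continuous (shiftedLegendre m) := by
  have : _root_.shiftedLegendre m = fun x =>
      (1 / (Nat.factorial m) : ℝ) * (derivative^[m] (P m)).eval x := by
    funext x; exact shiftedLegendre_eq m x
  rw [this]
  exact continuous_const.mul (Polynomial.continuous_aeval _)

end SL9

namespace SL9

lemma square_zero (m n a : ℕ) (hlt : n < m) (hle : a ≤ m + n - 2) :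
    ∫ x in (0:ℝ)..1, ∫ y in (0:ℝ)..1,
      (x - y) ^ a * shiftedLegendre m x * shiftedLegendre n y = 0 := by
  have hinner : ∀ x : ℝ, (∫ y in (0:ℝ)..1, (x - y) ^ a * shiftedLegendre m x * shiftedLegendre n y)
      = ∑ k ∈ Finset.range (a + 1),
          ((-1 : ℝ) ^ (k + a) * (a.choose k) *
            (∫ y in (0:ℝ)..1, y ^ (a - k) * shiftedLegendre n y)) * (x ^ k * shiftedLegendre m x) := by
    intro x
    have hrw : (fun y : ℝ => (x - y) ^ a * shiftedLegendre m x * shiftedLegendre n y)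
        = fun y => ∑ k ∈ Finset.range (a + 1),
            ((-1 : ℝ) ^ (k + a) * (a.choose k) * (x ^ k * shiftedLegendre m x))
              * (y ^ (a - k) * shiftedLegendre n y) := by
      funext y
      rw [sub_pow, Finset.sum_mul, Finset.sum_mul]
      apply Finset.sum_congr rfl
      intro k _
      ring
    rw [hrw, intervalIntegral.integral_finset_sum]
    · apply Finset.sum_congr rfl
      intro k _
      rw [intervalIntegral.integral_const_mul]
      ring
    · intro k _
      apply Continuous.intervalIntegrable
      exact continuous_const.mul ((continuous_pow _).mul (continuous_shiftedLegendre n))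
  simp_rw [hinner]
  rw [intervalIntegral.integral_finset_sum]
  · apply Finset.sum_eq_zero
    intro k hk
    rw [intervalIntegral.integral_const_mul]
    rcases lt_or_ge k m with h | h
    · rw [orth m k h, mul_zero]
    · have hk' : k ≤ a := by
        simpa using Nat.lt_succ_iff.mp (Finset.mem_range.mp hk)
      have hak : a - k < n := by omega
      rw [orth n (a - k) hak]
      simp
  · intro k _
    apply Continuous.intervalIntegrable
    exact continuous_const.mul ((continuous_pow _).mul (continuous_shiftedLegendre m))

end SL9

theorem stmt9 (m n : ℕ) (hlt : n < m) (hev : Even (m - n)) (a : ℕ) (ha : Even a)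
    (hle : a ≤ m + n - 2) :
    ∫ x in (0:ℝ)..1, ∫ y in (0:ℝ)..x,
        (x - y) ^ a * shiftedLegendre m x * shiftedLegendre n y = 0 := by
  have hmn : Even (m + n) := by
    obtain ⟨c, hc⟩ := hev
    exact ⟨c + n, by omega⟩
  set g : ℝ → ℝ := fun x => ∫ y in (0:ℝ)..x,
    (x - y) ^ a * shiftedLegendre m x * shiftedLegendre n y with hgdef
  set h : ℝ → ℝ := fun x => ∫ y in x..(1:ℝ),
    (x - y) ^ a * shiftedLegendre m x * shiftedLegendre n y with hhdef
  have hFc : Continuous (Function.uncurry fun x y : ℝ =>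
      (x - y) ^ a * shiftedLegendre m x * shiftedLegendre n y) := by
    apply Continuous.mul
    apply Continuous.mul
    · exact (continuous_fst.sub continuous_snd).pow a
    · exact (SL9.continuous_shiftedLegendre m).comp continuous_fst
    · exact (SL9.continuous_shiftedLegendre n).comp continuous_snd
  have hgc : Continuous g :=
    intervalIntegral.continuous_parametric_intervalIntegral_of_continuous hFc continuous_id
  have hhc : Continuous h := by
    have : h = fun x => - ∫ y in (1:ℝ)..x,
        (x - y) ^ a * shiftedLegendre m x * shiftedLegendre n y := by
      funext x
      simp only [hhdef]
      exact intervalIntegral.integral_symm 1 x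
    rw [this]
    exact (intervalIntegral.continuous_parametric_intervalIntegral_of_continuous
      hFc continuous_id).neg
  have hgh : ∀ x : ℝ, g (1 - x) = h x := by
    intro x
    have e1 := intervalIntegral.integral_comp_sub_left (a := x) (b := 1)
      (fun y => ((1 - x) - y) ^ a * shiftedLegendre m (1 - x) * shiftedLegendre n y) 1
    simp only [sub_self, hgdef] at e1 ⊢
    rw [← e1]
    apply intervalIntegral.integral_congr
    intro y _
    simp only
    rw [SL9.legendre_symm m x, SL9.legendre_symm n y]
    have hyx : ((1 - x) - (1 - y)) ^ a = (x - y) ^ a := by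
      rw [show (1 - x) - (1 - y) = -(x - y) by ring, ha.neg_pow]
    rw [hyx]
    have : (-1 : ℝ) ^ m * (-1 : ℝ) ^ n = 1 := by
      rw [← pow_add]; exact hmn.neg_one_pow
    calc (x - y) ^ a * ((-1 : ℝ) ^ m * shiftedLegendre m x)
          * ((-1 : ℝ) ^ n * shiftedLegendre n y)
        = ((-1 : ℝ) ^ m * (-1 : ℝ) ^ n) *
            ((x - y) ^ a * shiftedLegendre m x * shiftedLegendre n y) := by ring
      _ = (x - y) ^ a * shiftedLegendre m x * shiftedLegendre n y := by rw [this, one_mul]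
  have key1 : (∫ x in (0:ℝ)..1, g x) = ∫ x in (0:ℝ)..1, h x := by
    have e2 := intervalIntegral.integral_comp_sub_left (a := (0:ℝ)) (b := 1) g 1
    simp only [sub_self, sub_zero] at e2
    rw [← e2]
    apply intervalIntegral.integral_congr
    intro x _
    exact hgh x
  have key2 : ∀ x : ℝ, g x + h x = ∫ y in (0:ℝ)..1,
      (x - y) ^ a * shiftedLegendre m x * shiftedLegendre n y := by
    intro x
    have hcy : Continuous fun y : ℝ =>
        (x - y) ^ a * shiftedLegendre m x * shiftedLegendre n y :=
      (((continuous_const.sub continuous_id).pow a).mul continuous_const).mul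
        (SL9.continuous_shiftedLegendre n)
    exact intervalIntegral.integral_add_adjacent_intervals
      (hcy.intervalIntegrable 0 x) (hcy.intervalIntegrable x 1)
  have hsq := SL9.square_zero m n a hlt hle
  have hsum : (∫ x in (0:ℝ)..1, g x) + (∫ x in (0:ℝ)..1, h x)
      = ∫ x in (0:ℝ)..1, (g x + h x) :=
    (intervalIntegral.integral_add (hgc.intervalIntegrable 0 1)
      (hhc.intervalIntegrable 0 1)).symm
  have hfin : (∫ x in (0:ℝ)..1, (g x + h x)) = 0 := by
    rw [intervalIntegral.integral_congr (g := fun x => ∫ y in (0:ℝ)..1,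
      (x - y) ^ a * shiftedLegendre m x * shiftedLegendre n y) (fun x _ => key2 x)]
    exact hsq
  show (∫ x in (0:ℝ)..1, g x) = 0
  linarith [hsum, hfin, key1]
end

section
/- (Terminating case of Whipple's summation formula.) Let n be a natural number and let b, c be complex numbers such that b and c are not elements of {0, −1, −2, …, −(n−1)}. Then Σ_{k=0}^{n} [ (−n)_k (n+1)_k ((b+c−1)/2)_k / ( k! (b)_k (c)_k ) ] = 4ⁿ · ((b−n)/2)_n ((c−n)/2)_n / ( (b)_n (c)_n ). -/
/-- Pochhammer symbol `(a)_k = a(a+1)⋯(a+k-1)` for complex `a`. -/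
noncomputable def pochC (a : ℂ) (k : ℕ) : ℂ := ∏ i ∈ Finset.range k, (a + i)

lemma pochC_zero (a : ℂ) : pochC a 0 = 1 := by simp [pochC]

lemma pochC_succ (a : ℂ) (k : ℕ) : pochC a (k+1) = pochC a k * (a + k) :=
  Finset.prod_range_succ _ _

lemma pochC_succ' (a : ℂ) (k : ℕ) : pochC a (k+1) = a * pochC (a+1) k := by
  rw [pochC, Finset.prod_range_succ', pochC, mul_comm]
  congr 1
  · norm_num
  · exact Finset.prod_congr rfl (fun i _ => by push_cast; ring)

lemma pochC_congr {a a' : ℂ} (h : a = a') (k : ℕ) : pochC a k = pochC a' k := by rw [h]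

lemma pochC_ne_zero {a : ℂ} {m : ℕ} (h : ∀ i : ℕ, i < m → a + i ≠ 0) : pochC a m ≠ 0 :=
  Finset.prod_ne_zero_iff.mpr (fun i hi => h i (Finset.mem_range.mp hi))

lemma pochC_neg_nat (n : ℕ) : pochC (-(n:ℂ)) (n+1) = 0 :=
  Finset.prod_eq_zero (Finset.self_mem_range_succ n) (by simp)

/-- The summand of the hypergeometric series. -/
noncomputable def Wterm (n k : ℕ) (b c : ℂ) : ℂ :=
  pochC (-(n : ℂ)) k * pochC ((n : ℂ) + 1) k * pochC ((b + c - 1) / 2) k /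
    ((Nat.factorial k : ℂ) * pochC b k * pochC c k)

/-- WZ-style certificate function for the telescoping step. -/
noncomputable def gfun (n : ℕ) (b c : ℂ) : ℕ → ℂ
  | 0 => 0
  | (j+1) => b * c * ((j:ℂ)+1) * ((n:ℂ)+1-b-c-(j:ℂ)) *
      (pochC (-((n:ℂ)+1)) (j+1) * pochC ((n:ℂ)+2) j * pochC ((b+c-1)/2+1) j) /
      ((Nat.factorial (j+1) : ℂ) * pochC b (j+1) * pochC c (j+1))

set_option maxHeartbeats 2000000 in
lemma key_point (n : ℕ) (b c : ℂ)
    (hb : ∀ k : ℕ, k < n+1 → b ≠ -(k : ℂ)) (hc : ∀ k : ℕ, k < n+1 → c ≠ -(k : ℂ))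
    (k : ℕ) (hk : k < n+2) :
    b * c * Wterm (n+1) k b c - (b - ((n:ℂ)+1)) * (c - ((n:ℂ)+1)) * Wterm n k (b+1) (c+1)
      = gfun n b c (k+1) - gfun n b c k := by
  have hb0 : b ≠ 0 := by simpa using hb 0 (by omega)
  have hc0 : c ≠ 0 := by simpa using hc 0 (by omega)
  rcases k with _ | j
  · simp only [Wterm, gfun, pochC_zero, pochC_succ, Nat.factorial]
    push_cast
    field_simp
    linear_combination (-(-1 + b + b * (n:ℂ) - (n:ℂ) * 2 + (n:ℂ) * c - (n:ℂ) ^ 2 + c)) * mul_inv_cancel₀ hb0 + (-(-1 + b + b * (n:ℂ) - (n:ℂ) * 2 + (n:ℂ) * c - (n:ℂ) ^ 2 + c) * (b * b⁻¹)) * mul_inv_cancel₀ hc0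
  · by_cases hj : j = n
    · subst hj
      have hz1 : pochC (-(j:ℂ)) (j+1) = 0 := pochC_neg_nat j
      have hz2 : pochC (-((j:ℂ)+1)) (j+1+1) = 0 := by
        have := pochC_neg_nat (j+1); push_cast at this; exact this
      have hbP : pochC b (j+1) ≠ 0 := pochC_ne_zero (by
        intro i hi h
        exact hb i (by omega) (by linear_combination h))
      have hcP : pochC c (j+1) ≠ 0 := pochC_ne_zero (by
        intro i hi h
        exact hc i (by omega) (by linear_combination h))
      have hfac : ((j.factorial : ℕ) : ℂ) ≠ 0 := Nat.cast_ne_zero.mpr j.factorial_ne_zero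
      have hn1 : (j:ℂ)+1 ≠ 0 := by
        intro h; exact Nat.cast_ne_zero.mpr (show j+1 ≠ 0 by omega) (by push_cast; linear_combination h)
      have h2n : (j:ℂ)+2+(j:ℂ) ≠ 0 := by
        intro h; exact Nat.cast_ne_zero.mpr (show j+2+j ≠ 0 by omega) (by push_cast; linear_combination h)
      simp only [Wterm, gfun, Nat.factorial_succ]
      push_cast
      rw [hz1, hz2,
        show pochC ((j:ℂ)+1+1) (j+1) = pochC ((j:ℂ)+2) j * ((j:ℂ)+2+(j:ℂ)) from by
          rw [pochC_congr (show (j:ℂ)+1+1 = (j:ℂ)+2 by ring) (j+1), pochC_succ],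
        pochC_succ' ((b+c-1)/2) j]
      simp only [zero_mul, mul_zero, zero_div, sub_zero, zero_sub, ← mul_div_assoc]
      have hD : ((j:ℂ)+1) * (j.factorial : ℂ) * pochC b (j+1) * pochC c (j+1) ≠ 0 :=
        mul_ne_zero (mul_ne_zero (mul_ne_zero hn1 hfac) hbP) hcP
      rw [← neg_div, div_eq_div_iff hD hD]
      ring
    · have hjn : j < n := by omega
      have hB : pochC (b+1) j ≠ 0 := pochC_ne_zero (by
        intro i hi h
        have h2 := hb (i+1) (by omega); push_cast at h2
        exact h2 (by linear_combination h))
      have hC : pochC (c+1) j ≠ 0 := pochC_ne_zero (by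
        intro i hi h
        have h2 := hc (i+1) (by omega); push_cast at h2
        exact h2 (by linear_combination h))
      have hb1j : b+1+(j:ℂ) ≠ 0 := by
        intro h; have h2 := hb (j+1) (by omega); push_cast at h2
        exact h2 (by linear_combination h)
      have hc1j : c+1+(j:ℂ) ≠ 0 := by
        intro h; have h2 := hc (j+1) (by omega); push_cast at h2
        exact h2 (by linear_combination h)
      have hn2j : (n:ℂ)+2+(j:ℂ) ≠ 0 := by
        intro h; exact Nat.cast_ne_zero.mpr (show n+2+j ≠ 0 by omega) (by push_cast; linear_combination h)
      have hn3j : (n:ℂ)+2+((j:ℂ)+1) ≠ 0 := by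
        intro h; exact Nat.cast_ne_zero.mpr (show n+2+(j+1) ≠ 0 by omega) (by push_cast; linear_combination h)
      have hj1 : (j:ℂ)+1 ≠ 0 := by
        intro h; exact Nat.cast_ne_zero.mpr (show j+1 ≠ 0 by omega) (by push_cast; linear_combination h)
      have hj2 : (j:ℂ)+1+1 ≠ 0 := by
        intro h; exact Nat.cast_ne_zero.mpr (show j+1+1 ≠ 0 by omega) (by push_cast; linear_combination h)
      have hfac : ((j.factorial : ℕ) : ℂ) ≠ 0 := Nat.cast_ne_zero.mpr j.factorial_ne_zero
      simp only [Wterm, gfun, Nat.factorial_succ]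
      push_cast
      rw [show pochC (-((n:ℂ)+1)) (j+1) = -((n:ℂ)+1) * pochC (-(n:ℂ)) j from by
            rw [pochC_succ', pochC_congr (show -((n:ℂ)+1)+1 = -(n:ℂ) by ring) j],
          show pochC (-((n:ℂ)+1)) (j+1+1) = -((n:ℂ)+1) * (pochC (-(n:ℂ)) j * (-(n:ℂ) + (j:ℂ))) from by
            rw [pochC_succ', pochC_congr (show -((n:ℂ)+1)+1 = -(n:ℂ) by ring) (j+1), pochC_succ],
          show pochC ((n:ℂ)+1+1) (j+1) = pochC ((n:ℂ)+2) j * ((n:ℂ)+2+(j:ℂ)) from by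
            rw [pochC_congr (show (n:ℂ)+1+1 = (n:ℂ)+2 by ring) (j+1), pochC_succ],
          show pochC ((n:ℂ)+2) (j+1) = pochC ((n:ℂ)+2) j * ((n:ℂ)+2+(j:ℂ)) from pochC_succ _ _,
          show pochC ((n:ℂ)+1) (j+1) = ((n:ℂ)+1) * pochC ((n:ℂ)+2) j from by
            rw [pochC_succ', pochC_congr (show (n:ℂ)+1+1 = (n:ℂ)+2 by ring) j],
          show pochC (-(n:ℂ)) (j+1) = pochC (-(n:ℂ)) j * (-(n:ℂ)+(j:ℂ)) from pochC_succ _ _,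
          show pochC ((b+c-1)/2) (j+1) = (b+c-1)/2 * pochC ((b+c-1)/2+1) j from pochC_succ' _ _,
          show pochC ((b+1+(c+1)-1)/2) (j+1) = pochC ((b+c-1)/2+1) j * ((b+c-1)/2+1+(j:ℂ)) from by
            rw [pochC_congr (show (b+1+(c+1)-1)/2 = (b+c-1)/2+1 by ring) (j+1), pochC_succ],
          show pochC ((b+c-1)/2+1) (j+1) = pochC ((b+c-1)/2+1) j * ((b+c-1)/2+1+(j:ℂ)) from pochC_succ _ _,
          show pochC b (j+1+1) = b * (pochC (b+1) j * (b+1+(j:ℂ))) from by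
            rw [pochC_succ', pochC_succ],
          show pochC b (j+1) = b * pochC (b+1) j from pochC_succ' _ _,
          show pochC (b+1) (j+1) = pochC (b+1) j * (b+1+(j:ℂ)) from pochC_succ _ _,
          show pochC c (j+1+1) = c * (pochC (c+1) j * (c+1+(j:ℂ))) from by
            rw [pochC_succ', pochC_succ],
          show pochC c (j+1) = c * pochC (c+1) j from pochC_succ' _ _,
          show pochC (c+1) (j+1) = pochC (c+1) j * (c+1+(j:ℂ)) from pochC_succ _ _]
      simp only [← mul_div_assoc]
      have hD1 : ((j:ℂ)+1) * (j.factorial : ℂ) * (b * pochC (b+1) j) * (c * pochC (c+1) j) ≠ 0 :=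
        mul_ne_zero (mul_ne_zero (mul_ne_zero hj1 hfac) (mul_ne_zero hb0 hB)) (mul_ne_zero hc0 hC)
      have hD2 : ((j:ℂ)+1) * (j.factorial : ℂ) * (pochC (b+1) j * (b+1+(j:ℂ))) * (pochC (c+1) j * (c+1+(j:ℂ))) ≠ 0 :=
        mul_ne_zero (mul_ne_zero (mul_ne_zero hj1 hfac) (mul_ne_zero hB hb1j)) (mul_ne_zero hC hc1j)
      have hD3 : ((j:ℂ)+1+1) * (((j:ℂ)+1) * (j.factorial : ℂ)) * (b * (pochC (b+1) j * (b+1+(j:ℂ)))) * (c * (pochC (c+1) j * (c+1+(j:ℂ)))) ≠ 0 :=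
        mul_ne_zero (mul_ne_zero (mul_ne_zero hj2 (mul_ne_zero hj1 hfac)) (mul_ne_zero hb0 (mul_ne_zero hB hb1j))) (mul_ne_zero hc0 (mul_ne_zero hC hc1j))
      rw [div_sub_div _ _ hD1 hD2, div_sub_div _ _ hD3 hD1,
        div_eq_div_iff (mul_ne_zero hD1 hD2) (mul_ne_zero hD3 hD1)]
      ring

lemma stepA (n : ℕ) (b c : ℂ)
    (hb : ∀ k : ℕ, k < n+1 → b ≠ -(k : ℂ)) (hc : ∀ k : ℕ, k < n+1 → c ≠ -(k : ℂ)) :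
    b * c * ∑ k ∈ Finset.range (n+1+1), Wterm (n+1) k b c
      = (b - ((n:ℂ)+1)) * (c - ((n:ℂ)+1)) * ∑ k ∈ Finset.range (n+1), Wterm n k (b+1) (c+1) := by
  have hext : ∑ k ∈ Finset.range (n+1+1), Wterm n k (b+1) (c+1)
      = ∑ k ∈ Finset.range (n+1), Wterm n k (b+1) (c+1) := by
    rw [Finset.sum_range_succ]
    simp [Wterm, pochC_neg_nat n]
  have htel : ∑ k ∈ Finset.range (n+1+1), (gfun n b c (k+1) - gfun n b c k) = 0 := by
    have hz : pochC (-((n:ℂ)+1)) (n+1+1) = 0 := by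
      have := pochC_neg_nat (n+1); push_cast at this; exact this
    have htop : gfun n b c (n+1+1) = 0 := by
      simp only [gfun]
      rw [hz]
      simp
    rw [Finset.sum_range_sub (gfun n b c), htop]
    simp [gfun]
  have hsum : ∑ k ∈ Finset.range (n+1+1),
      (b * c * Wterm (n+1) k b c
        - (b - ((n:ℂ)+1)) * (c - ((n:ℂ)+1)) * Wterm n k (b+1) (c+1)) = 0 := by
    rw [Finset.sum_congr rfl (fun k hk =>
      key_point n b c hb hc k (by have := Finset.mem_range.mp hk; omega))]
    exact htel
  rw [Finset.sum_sub_distrib, ← Finset.mul_sum, ← Finset.mul_sum] at hsum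
  rw [← hext]
  exact sub_eq_zero.mp hsum

lemma whipple (n : ℕ) (b c : ℂ)
    (hb : ∀ k : ℕ, k < n → b ≠ -(k : ℂ)) (hc : ∀ k : ℕ, k < n → c ≠ -(k : ℂ)) :
    ∑ k ∈ Finset.range (n + 1), Wterm n k b c =
      4 ^ n * pochC ((b - n) / 2) n * pochC ((c - n) / 2) n / (pochC b n * pochC c n) := by
  induction n generalizing b c with
  | zero => simp [Wterm, pochC]
  | succ n ih =>
    have hb0 : b ≠ 0 := by simpa using hb 0 (by omega)
    have hc0 : c ≠ 0 := by simpa using hc 0 (by omega)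
    have hB : pochC (b+1) n ≠ 0 := pochC_ne_zero (by
      intro i hi h
      have h2 := hb (i+1) (by omega); push_cast at h2
      exact h2 (by linear_combination h))
    have hC : pochC (c+1) n ≠ 0 := pochC_ne_zero (by
      intro i hi h
      have h2 := hc (i+1) (by omega); push_cast at h2
      exact h2 (by linear_combination h))
    have ihs := ih (b+1) (c+1)
      (by intro k hk h
          have h2 := hb (k+1) (by omega); push_cast at h2
          exact h2 (by linear_combination h))
      (by intro k hk h
          have h2 := hc (k+1) (by omega); push_cast at h2
          exact h2 (by linear_combination h))
    have key := stepA n b c hb hc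
    rw [ihs] at key
    push_cast
    have hrhs : b * c * (4^(n+1) * pochC ((b - ((n:ℂ)+1))/2) (n+1) * pochC ((c - ((n:ℂ)+1))/2) (n+1)
          / (pochC b (n+1) * pochC c (n+1)))
        = (b - ((n:ℂ)+1)) * (c - ((n:ℂ)+1)) *
            (4^n * pochC ((b + 1 - (n:ℂ))/2) n * pochC ((c + 1 - (n:ℂ))/2) n
              / (pochC (b+1) n * pochC (c+1) n)) := by
      rw [pochC_succ' b n, pochC_succ' c n,
        show pochC ((b - ((n:ℂ)+1))/2) (n+1) = (b - ((n:ℂ)+1))/2 * pochC ((b + 1 - (n:ℂ))/2) n from by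
          rw [pochC_succ', pochC_congr (show (b - ((n:ℂ)+1))/2+1 = (b + 1 - (n:ℂ))/2 by ring) n],
        show pochC ((c - ((n:ℂ)+1))/2) (n+1) = (c - ((n:ℂ)+1))/2 * pochC ((c + 1 - (n:ℂ))/2) n from by
          rw [pochC_succ', pochC_congr (show (c - ((n:ℂ)+1))/2+1 = (c + 1 - (n:ℂ))/2 by ring) n]]
      simp only [← mul_div_assoc]
      rw [div_eq_div_iff
        (mul_ne_zero (mul_ne_zero hb0 hB) (mul_ne_zero hc0 hC))
        (mul_ne_zero hB hC)]
      ring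
    exact mul_left_cancel₀ (mul_ne_zero hb0 hc0) (key.trans hrhs.symm)

theorem stmt10 (n : ℕ) (b c : ℂ)
    (hb : ∀ k : ℕ, k < n → b ≠ -(k : ℂ)) (hc : ∀ k : ℕ, k < n → c ≠ -(k : ℂ)) :
    ∑ k ∈ Finset.range (n + 1),
        pochC (-(n : ℂ)) k * pochC ((n : ℂ) + 1) k * pochC ((b + c - 1) / 2) k /
          ((Nat.factorial k : ℂ) * pochC b k * pochC c k) =
      4 ^ n * pochC ((b - n) / 2) n * pochC ((c - n) / 2) n / (pochC b n * pochC c n) := by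
  exact whipple n b c hb hc
end

section
/- For every natural number n ≥ 1, ∫₀¹ p_n(x) ln x dx = (−1)^{n+1} / ( n(n+1) ). -/
open MeasureTheory intervalIntegral

namespace ShiftedLegendreAux

open Polynomial Finset Real Filter Set

lemma iteratedDeriv_eval (p : ℝ[X]) (n : ℕ) :
    iteratedDeriv n (fun y : ℝ => p.eval y) = fun x => (derivative^[n] p).eval x := by
  induction n generalizing p with
  | zero => simp
  | succ n ih =>
    rw [iteratedDeriv_succ', Function.iterate_succ_apply]
    have hd : (deriv fun y : ℝ => eval y p) = fun y : ℝ => eval y (derivative p) :=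
      funext fun y => Polynomial.deriv p
    rw [hd, ih (derivative p)]

lemma legendre_poly_eq (n : ℕ) :
    (X ^ n * (X - 1) ^ n : ℝ[X]) =
      ∑ j ∈ Finset.range (n+1), Polynomial.C ((-1:ℝ)^(n-j) * (n.choose j)) * X^(n+j) := by
  have h : ((X : ℝ[X]) - 1) ^ n = ∑ j ∈ Finset.range (n+1), X^j * (-1)^(n-j) * (n.choose j) := by
    have := add_pow (X : ℝ[X]) (-1) n
    simpa [sub_eq_add_neg] using this
  rw [h, Finset.mul_sum]
  apply Finset.sum_congr rfl
  intro j hj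
  have : ((n.choose j : ℝ[X])) = Polynomial.C ((n.choose j : ℝ)) := by simp
  rw [this]
  ring_nf
  simp [map_mul, map_pow, pow_add]
  ring

lemma legendre_deriv (n : ℕ) :
    derivative^[n] (∑ j ∈ Finset.range (n+1),
        Polynomial.C ((-1:ℝ)^(n-j) * (n.choose j)) * X^(n+j)) =
      ∑ j ∈ Finset.range (n+1),
        Polynomial.C ((-1:ℝ)^(n-j) * (n.choose j) * ((n+j).descFactorial n)) * X^j := by
  rw [Polynomial.iterate_derivative_sum]
  apply Finset.sum_congr rfl
  intro j hj
  rw [Polynomial.iterate_derivative_C_mul, Polynomial.iterate_derivative_X_pow_eq_natCast_mul]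
  have h2 : n + j - n = j := by omega
  rw [h2]
  have : ((((n+j).descFactorial n : ℕ)) : ℝ[X]) = Polynomial.C (((n+j).descFactorial n : ℝ)) := by
    simp
  rw [this, ← mul_assoc, ← Polynomial.C_mul]

lemma shiftedLegendre_eq (n : ℕ) (x : ℝ) :
    shiftedLegendre n x =
      ∑ j ∈ Finset.range (n+1), (-1:ℝ)^(n-j) * (n.choose j) * ((n+j).choose n) * x^j := by
  have hf : (fun t : ℝ => t ^ n * (t - 1) ^ n)
      = fun t : ℝ => (X ^ n * (X - 1) ^ n : ℝ[X]).eval t := by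
    funext t; simp
  rw [_root_.shiftedLegendre, hf, iteratedDeriv_eval, legendre_poly_eq, legendre_deriv]
  simp only []
  rw [Polynomial.eval_finset_sum, Finset.mul_sum]
  apply Finset.sum_congr rfl
  intro j hj
  rw [Polynomial.eval_mul, Polynomial.eval_C, Polynomial.eval_pow, Polynomial.eval_X]
  rw [Nat.descFactorial_eq_factorial_mul_choose]
  have hfac : (n.factorial : ℝ) ≠ 0 := by positivity
  push_cast
  field_simp

lemma intervalIntegrable_pow_mul_log (k : ℕ) :
    IntervalIntegrable (fun x : ℝ => x ^ k * Real.log x) volume 0 1 := by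
  rw [intervalIntegrable_iff_integrableOn_Ioc_of_le zero_le_one]
  have hg : IntervalIntegrable (fun x : ℝ => x ^ (-(1/2) : ℝ)) volume 0 1 :=
    intervalIntegrable_rpow' (by norm_num)
  rw [intervalIntegrable_iff_integrableOn_Ioc_of_le zero_le_one] at hg
  have hg2 : IntegrableOn (fun x : ℝ => 2 * x ^ (-(1/2) : ℝ)) (Set.Ioc (0:ℝ) 1) :=
    hg.const_mul 2
  refine hg2.integrable.mono ?_ ?_
  · exact ((measurable_id.pow_const k).mul Real.measurable_log).aestronglyMeasurable
  · filter_upwards [ae_restrict_mem measurableSet_Ioc] with x hx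
    have hx0 : 0 < x := hx.1
    have hx1 : x ≤ 1 := hx.2
    have h1 : |Real.log x * x ^ ((1:ℝ)/2)| < 1 / (1/2) :=
      Real.abs_log_mul_self_rpow_lt x (1/2) hx0 hx1 (by norm_num)
    have hpos : (0:ℝ) < x ^ ((1:ℝ)/2) := Real.rpow_pos_of_pos hx0 _
    have h2 : |Real.log x| * x ^ ((1:ℝ)/2) ≤ 2 := by
      rw [abs_mul, abs_of_pos hpos] at h1
      norm_num at h1 ⊢
      linarith
    have hlog : |Real.log x| ≤ 2 * x ^ (-(1/2) : ℝ) := by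
      have h3 : |Real.log x| ≤ 2 / (x ^ ((1:ℝ)/2)) := (le_div_iff₀ hpos).mpr h2
      rwa [div_eq_mul_inv, ← Real.rpow_neg hx0.le] at h3
    have hxk : x ^ k ≤ 1 := pow_le_one₀ hx0.le hx1
    rw [Real.norm_eq_abs, Real.norm_eq_abs, abs_mul, abs_pow, abs_of_pos hx0]
    calc x ^ k * |Real.log x| ≤ 1 * |Real.log x| := by
          apply mul_le_mul_of_nonneg_right hxk (abs_nonneg _)
      _ = |Real.log x| := one_mul _
      _ ≤ 2 * x ^ (-(1/2) : ℝ) := hlog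
      _ ≤ |2 * x ^ (-(1/2) : ℝ)| := le_abs_self _

lemma integral_pow_mul_log (k : ℕ) :
    ∫ x in (0:ℝ)..1, x ^ k * Real.log x = -(1 / ((k:ℝ)+1)^2) := by
  set F : ℝ → ℝ := fun x => x ^ (k+1) * Real.log x / ((k:ℝ)+1) - x ^ (k+1) / ((k:ℝ)+1)^2
    with hF
  have hk : ((k:ℝ)+1) ≠ 0 := by positivity
  have hcont : ContinuousOn F (Icc 0 1) := by
    intro x hx
    rcases eq_or_lt_of_le hx.1 with h0 | h0
    · subst h0
      have hF0 : F 0 = 0 := by simp [hF]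
      rw [ContinuousWithinAt, hF0]
      have hsub : Icc (0:ℝ) 1 ⊆ insert 0 (Ioi 0) := by
        intro y hy
        rcases eq_or_lt_of_le hy.1 with h | h
        · exact Or.inl h.symm
        · exact Or.inr h
      refine Tendsto.mono_left ?_ (nhdsWithin_mono _ hsub)
      rw [nhdsWithin_insert, Filter.tendsto_sup]
      constructor
      · simpa [hF0] using (tendsto_pure_nhds F 0)
      · have h1 : Tendsto (fun x : ℝ => Real.log x * x ^ ((k:ℝ)+1)) (nhdsWithin 0 (Ioi 0))
            (nhds 0) := tendsto_log_mul_rpow_nhdsGT_zero (by positivity)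
        have h1' : Tendsto (fun x : ℝ => x ^ (k+1) * Real.log x) (nhdsWithin 0 (Ioi 0))
            (nhds 0) := by
          apply h1.congr'
          filter_upwards [self_mem_nhdsWithin] with y hy
          rw [← Real.rpow_natCast y (k+1)]
          push_cast
          ring
        have h2 : Tendsto (fun x : ℝ => x ^ (k+1) / ((k:ℝ)+1)^2) (nhdsWithin 0 (Ioi 0))
            (nhds 0) := by
          have := ((continuous_pow (k+1)).div_const (((k:ℝ)+1)^2)).tendsto 0
          simpa using this.mono_left nhdsWithin_le_nhds
        have := (h1'.div_const (((k:ℝ)+1))).sub h2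
        simpa [hF] using this
    · apply ContinuousAt.continuousWithinAt
      have : ContinuousAt Real.log x := Real.continuousAt_log h0.ne'
      fun_prop (disch := exact h0.ne')
  have hderiv : ∀ x ∈ Ioo (0:ℝ) 1, HasDerivWithinAt F (x ^ k * Real.log x) (Ioi x) x := by
    intro x hx
    have h1 : HasDerivAt (fun y : ℝ => y ^ (k+1)) (((k:ℝ)+1) * x ^ k) x := by
      simpa using hasDerivAt_pow (k+1) x
    have h2 : HasDerivAt Real.log x⁻¹ x := Real.hasDerivAt_log hx.1.ne'
    have h3 : HasDerivAt (fun y : ℝ => y ^ (k+1) * Real.log y)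
        (((k:ℝ)+1) * x ^ k * Real.log x + x ^ (k+1) * x⁻¹) x := h1.mul h2
    have h4 : HasDerivAt F ((((k:ℝ)+1) * x ^ k * Real.log x + x ^ (k+1) * x⁻¹) / ((k:ℝ)+1)
        - (((k:ℝ)+1) * x ^ k) / ((k:ℝ)+1)^2) x := (h3.div_const _).sub (h1.div_const _)
    have heq : (((k:ℝ)+1) * x ^ k * Real.log x + x ^ (k+1) * x⁻¹) / ((k:ℝ)+1)
        - (((k:ℝ)+1) * x ^ k) / ((k:ℝ)+1)^2 = x ^ k * Real.log x := by
      have hx0 : x ≠ 0 := hx.1.ne'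
      field_simp
      ring
    rw [heq] at h4
    exact h4.hasDerivWithinAt
  have := integral_eq_sub_of_hasDeriv_right_of_le zero_le_one hcont hderiv
    (intervalIntegrable_pow_mul_log k)
  rw [this]
  simp [hF]

lemma alt_sum_choose_choose (N i : ℕ) (h : i < N) :
    ∑ m ∈ Finset.range (N+1), (-1:ℤ)^m * (N.choose m) * (m.choose i) = 0 := by
  have hsub : Finset.Ico i (N+1) ⊆ Finset.range (N+1) := by
    rw [Finset.range_eq_Ico]; exact Finset.Ico_subset_Ico (Nat.zero_le _) le_rfl
  rw [← Finset.sum_subset hsub (by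
    intro m hm hnm
    have : m < i := by
      simp only [Finset.mem_Ico, Finset.mem_range] at *
      omega
    rw [Nat.choose_eq_zero_of_lt this]
    simp)]
  rw [Finset.sum_Ico_eq_sum_range]
  have hNi : N + 1 - i = (N - i) + 1 := by omega
  rw [hNi]
  have key : ∀ t ∈ Finset.range ((N-i)+1),
      (-1:ℤ)^(i+t) * (N.choose (i+t)) * ((i+t).choose i)
        = ((-1:ℤ)^i * (N.choose i)) * ((-1:ℤ)^t * ((N-i).choose t)) := by
    intro t ht
    simp only [Finset.mem_range] at ht
    have h1 : i + t ≤ N := by omega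
    have h2 : i ≤ i + t := Nat.le_add_right _ _
    have hmul := Nat.choose_mul (n := N) h2
    have h3 : i + t - i = t := by omega
    rw [h3] at hmul
    have hmulZ : ((N.choose (i+t)) * ((i+t).choose i) : ℤ) = (N.choose i) * ((N-i).choose t) := by
      exact_mod_cast congrArg (Nat.cast : ℕ → ℤ) hmul
    rw [pow_add]
    linear_combination ((-1:ℤ)^i * (-1:ℤ)^t) * hmulZ
  rw [Finset.sum_congr rfl key, ← Finset.mul_sum]
  rw [Int.alternating_sum_range_choose_of_ne (by omega : N - i ≠ 0)]
  ring

lemma alt_sum_vandermonde (N r : ℕ) (h : r < N) :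
    ∑ m ∈ Finset.range (N+1), (-1:ℤ)^m * (N.choose m) * ((r+m).choose r) = 0 := by
  have expand : ∀ m, ((r+m).choose r : ℤ) =
      ∑ i ∈ Finset.range (r+1), ((m.choose i : ℤ)) * ((r.choose (r-i) : ℤ)) := by
    intro m
    have h0 := Nat.add_choose_eq m r r
    rw [Finset.Nat.sum_antidiagonal_eq_sum_range_succ_mk] at h0
    rw [Nat.add_comm r m, h0]
    push_cast
    rfl
  calc ∑ m ∈ Finset.range (N+1), (-1:ℤ)^m * (N.choose m) * ((r+m).choose r)
      = ∑ m ∈ Finset.range (N+1), ∑ i ∈ Finset.range (r+1),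
          ((r.choose (r-i) : ℤ)) * ((-1:ℤ)^m * (N.choose m) * (m.choose i)) := by
        apply Finset.sum_congr rfl
        intro m _
        rw [expand m, Finset.mul_sum]
        apply Finset.sum_congr rfl
        intro i _
        ring
    _ = ∑ i ∈ Finset.range (r+1), ((r.choose (r-i) : ℤ)) *
          ∑ m ∈ Finset.range (N+1), ((-1:ℤ)^m * (N.choose m) * (m.choose i)) := by
        rw [Finset.sum_comm]
        apply Finset.sum_congr rfl
        intro i _
        rw [Finset.mul_sum]
    _ = 0 := by
        apply Finset.sum_eq_zero
        intro i hi
        simp only [Finset.mem_range] at hi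
        rw [alt_sum_choose_choose N i (by omega)]
        ring

lemma key_identity (n : ℕ) (hn : 1 ≤ n) :
    ∑ j ∈ Finset.range (n+1), (-1:ℤ)^j * ((n+1).choose (j+1)) * ((n+j).choose (n-1)) = 1 := by
  have h := alt_sum_vandermonde (n+1) (n-1) (by omega)
  rw [Finset.sum_range_succ'] at h
  have hrw : ∀ j : ℕ, (n-1) + (j+1) = n + j := by omega
  simp only [hrw, pow_zero, Nat.choose_zero_right, Nat.add_zero, Nat.choose_self, one_mul,
    Nat.cast_one, mul_one] at h
  have h3 : ∑ j ∈ Finset.range (n+1), (-1:ℤ)^(j+1) * ((n+1).choose (j+1)) * ((n+j).choose (n-1))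
      = -∑ j ∈ Finset.range (n+1), (-1:ℤ)^j * ((n+1).choose (j+1)) * ((n+j).choose (n-1)) := by
    rw [← Finset.sum_neg_distrib]
    apply Finset.sum_congr rfl
    intro j _
    rw [pow_succ]
    ring
  rw [h3] at h
  linarith

lemma real_identity (n : ℕ) (hn : 1 ≤ n) :
    ∑ j ∈ Finset.range (n+1),
        ((-1:ℝ)^(n-j) * (n.choose j) * ((n+j).choose n)) * (-(1/((j:ℝ)+1)^2)) =
      (-1:ℝ)^(n+1) / ((n:ℝ) * ((n:ℝ)+1)) := by
  have hterm : ∀ j ∈ Finset.range (n+1),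
      ((-1:ℝ)^(n-j) * (n.choose j) * ((n+j).choose n)) * (-(1/((j:ℝ)+1)^2)) =
        ((-1:ℝ)^(n+1) / ((n:ℝ) * ((n:ℝ)+1))) *
          ((-1:ℝ)^j * (((n+1).choose (j+1) : ℝ)) * (((n+j).choose (n-1) : ℝ))) := by
    intro j hj
    simp only [Finset.mem_range] at hj
    have hjn : j ≤ n := by omega
    have hsign : (-1:ℝ)^(n-j) = (-1)^n * (-1)^j := by
      conv_rhs => rw [show n = (n-j)+j by omega]
      rw [pow_add, mul_assoc, ← pow_add, Even.neg_one_pow ⟨j, rfl⟩, mul_one]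
    have e1 : ((j:ℝ)+1) * (((n+1).choose (j+1) : ℝ)) = ((n:ℝ)+1) * ((n.choose j : ℝ)) := by
      have := Nat.add_one_mul_choose_eq n j
      have := congrArg (Nat.cast : ℕ → ℝ) this
      push_cast at this
      linarith
    have e2 : (n:ℝ) * (((n+j).choose n : ℝ)) = ((j:ℝ)+1) * (((n+j).choose (n-1) : ℝ)) := by
      have h0 := Nat.choose_succ_right_eq (n+j) (n-1)
      have h1 : n - 1 + 1 = n := by omega
      have h2 : n + j - (n-1) = j + 1 := by omega
      rw [h1, h2] at h0
      have := congrArg (Nat.cast : ℕ → ℝ) h0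
      push_cast at this
      linarith
    have hj1 : ((j:ℝ)+1) ≠ 0 := by positivity
    have hn0 : (n:ℝ) ≠ 0 := by
      simp only [ne_eq, Nat.cast_eq_zero]; omega
    have hn1 : ((n:ℝ)+1) ≠ 0 := by positivity
    rw [hsign, pow_succ]
    field_simp
    linear_combination (-((-1:ℝ)^n * (((n:ℝ)+1) * ((n.choose j : ℝ))))) * e2
      + ((-1:ℝ)^n * (((j:ℝ)+1) * (((n+j).choose (n-1) : ℝ)))) * e1
  rw [Finset.sum_congr rfl hterm, ← Finset.mul_sum]
  have hkey := key_identity n hn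
  have hkeyR : ∑ j ∈ Finset.range (n+1),
      (-1:ℝ)^j * (((n+1).choose (j+1) : ℝ)) * (((n+j).choose (n-1) : ℝ)) = 1 := by
    have := congrArg (Int.cast : ℤ → ℝ) hkey
    push_cast at this
    convert this using 2
  rw [hkeyR, mul_one]

end ShiftedLegendreAux

open ShiftedLegendreAux in
theorem stmt14 (n : ℕ) (hn : 1 ≤ n) :
    ∫ x in (0:ℝ)..1, shiftedLegendre n x * Real.log x =
      (-1 : ℝ) ^ (n + 1) / ((n : ℝ) * ((n : ℝ) + 1)) := by
  have hfun : ∀ x : ℝ, shiftedLegendre n x * Real.log x =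
      ∑ j ∈ Finset.range (n+1),
        ((-1:ℝ)^(n-j) * (n.choose j) * ((n+j).choose n)) * (x^j * Real.log x) := by
    intro x
    rw [shiftedLegendre_eq, Finset.sum_mul]
    apply Finset.sum_congr rfl
    intro j _
    ring
  simp only [hfun]
  rw [intervalIntegral.integral_finset_sum]
  · have : ∀ j ∈ Finset.range (n+1),
        (∫ x in (0:ℝ)..1, ((-1:ℝ)^(n-j) * (n.choose j) * ((n+j).choose n)) * (x^j * Real.log x))
          = ((-1:ℝ)^(n-j) * (n.choose j) * ((n+j).choose n)) * (-(1/((j:ℝ)+1)^2)) := by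
      intro j _
      rw [intervalIntegral.integral_const_mul, integral_pow_mul_log]
    rw [Finset.sum_congr rfl this]
    exact real_identity n hn
  · intro j _
    exact (intervalIntegrable_pow_mul_log j).const_mul _
end

section
/- For every natural number n, ∫₀¹ p_n(x) · N p_n(x) dx = 1 / ( (2n+1)(2n+2) ), where N p_n(x) = ∫₀ˣ (F(x) − F(t))/(x − t) dt and F(t) = ∫₀ᵗ p_n(u) du. -/
open MeasureTheory intervalIntegral Polynomial Finset

/-- iterated derivative of a polynomial function -/
lemma iteratedDeriv_polynomial (k : ℕ) (q : Polynomial ℝ) :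
    iteratedDeriv k (fun x => q.eval x) = fun x => (derivative^[k] q).eval x := by
  induction k generalizing q with
  | zero => simp
  | succ k ih =>
    have hd : (deriv fun x => q.eval x) = fun x => (derivative q).eval x :=
      funext fun x => Polynomial.deriv q
    rw [iteratedDeriv_succ', hd, ih, Function.iterate_succ_apply]

/-- divisibility structure of iterated derivatives of X^n(X-1)^n -/
lemma legendre_aux_dvd (n : ℕ) (j : ℕ) (hj : j ≤ n) :
    ∃ r : Polynomial ℝ, derivative^[j] (X ^ n * (X - 1) ^ n) =
      X ^ (n - j) * (X - 1) ^ (n - j) * r := by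
  induction j with
  | zero => exact ⟨1, by simp⟩
  | succ j ih =>
    obtain ⟨r, hr⟩ := ih (le_of_lt (Nat.lt_of_succ_le hj))
    obtain ⟨b, hb⟩ : ∃ b, n - j = b + 1 := ⟨n - (j+1), by omega⟩
    have hb2 : n - (j+1) = b := by omega
    refine ⟨(C ((b:ℝ)+1)) * ((X-1)*r + X*r) + X*(X-1)*(derivative r), ?_⟩
    rw [Function.iterate_succ_apply', hr, hb, hb2]
    simp only [derivative_mul, derivative_pow, derivative_X, derivative_sub, derivative_one,
      Nat.cast_add, Nat.cast_one, Nat.add_sub_cancel, sub_zero, mul_one, C_add, C_1]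
    ring

lemma legendre_aux_eval_zero (n : ℕ) (j : ℕ) (hj : j < n) :
    (derivative^[j] (X ^ n * (X - 1) ^ n : Polynomial ℝ)).eval 0 = 0 ∧
    (derivative^[j] (X ^ n * (X - 1) ^ n : Polynomial ℝ)).eval 1 = 0 := by
  obtain ⟨r, hr⟩ := legendre_aux_dvd n j hj.le
  have h : 0 < n - j := by omega
  constructor <;> rw [hr] <;> simp [zero_pow h.ne', sub_self]

/-- single integration by parts for polynomials with vanishing boundary -/
lemma poly_ibp (f g : Polynomial ℝ) (h0 : f.eval 0 = 0) (h1 : f.eval 1 = 0) :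
    ∫ x in (0:ℝ)..1, (derivative f).eval x * g.eval x
      = - ∫ x in (0:ℝ)..1, f.eval x * (derivative g).eval x := by
  have H := intervalIntegral.integral_mul_deriv_eq_deriv_mul
    (u := fun x => g.eval x) (v := fun x => f.eval x)
    (u' := fun x => (derivative g).eval x) (v' := fun x => (derivative f).eval x)
    (a := 0) (b := 1)
    (fun x _ => g.hasDerivAt x) (fun x _ => f.hasDerivAt x)
    ((derivative g).continuous.intervalIntegrable 0 1)
    ((derivative f).continuous.intervalIntegrable 0 1)
  simp only [h0, h1, mul_zero, sub_zero, zero_sub] at H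
  calc ∫ x in (0:ℝ)..1, (derivative f).eval x * g.eval x
      = ∫ x in (0:ℝ)..1, g.eval x * (derivative f).eval x := by simp_rw [mul_comm]
    _ = - ∫ x in (0:ℝ)..1, (derivative g).eval x * f.eval x := H
    _ = - ∫ x in (0:ℝ)..1, f.eval x * (derivative g).eval x := by simp_rw [mul_comm]

/-- iterated integration by parts -/
lemma poly_ibp_iter (f : Polynomial ℝ) (m : ℕ)
    (h : ∀ j < m, (derivative^[j] f).eval 0 = 0 ∧ (derivative^[j] f).eval 1 = 0) :
    ∀ g : Polynomial ℝ, ∫ x in (0:ℝ)..1, (derivative^[m] f).eval x * g.eval x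
      = (-1)^m * ∫ x in (0:ℝ)..1, f.eval x * (derivative^[m] g).eval x := by
  induction m with
  | zero => simp
  | succ m ih =>
    intro g
    rw [Function.iterate_succ_apply']
    rw [poly_ibp _ g (h m (Nat.lt_succ_self m)).1 (h m (Nat.lt_succ_self m)).2]
    rw [ih (fun j hj => h j (hj.trans (Nat.lt_succ_self m))) (derivative g)]
    rw [← Function.iterate_succ_apply]
    ring

/-- the Beta-type integral -/
lemma beta_nat (a b : ℕ) :
    ∫ x in (0:ℝ)..1, x ^ a * (x - 1) ^ b
      = (-1)^b * (Nat.factorial a) * (Nat.factorial b) / (Nat.factorial (a + b + 1)) := by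
  induction b generalizing a with
  | zero =>
    simp only [pow_zero, mul_one, Nat.factorial_zero, Nat.cast_one, one_mul, Nat.add_zero]
    rw [integral_pow, Nat.factorial_succ]
    rw [one_pow, zero_pow (Nat.succ_ne_zero a)]
    have hfa : (Nat.factorial a : ℝ) ≠ 0 := by exact_mod_cast Nat.factorial_ne_zero a
    push_cast
    field_simp
    norm_num
  | succ b ih =>
    have hu : ∀ x ∈ Set.uIcc (0:ℝ) 1, HasDerivAt (fun x : ℝ => (x-1)^(b+1))
        (((b:ℝ)+1) * (x-1)^b) x := by
      intro x _
      have h1 : HasDerivAt (fun x : ℝ => x - 1) 1 x := (hasDerivAt_id x).sub_const 1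
      have := h1.fun_pow (b+1)
      simpa using this
    have hv : ∀ x ∈ Set.uIcc (0:ℝ) 1, HasDerivAt (fun x : ℝ => x^(a+1)/((a:ℝ)+1))
        (x ^ a) x := by
      intro x _
      have := (hasDerivAt_pow (a+1) x).div_const ((a:ℝ)+1)
      have ha : ((a:ℝ)+1) ≠ 0 := by positivity
      refine this.congr_deriv ?_
      push_cast
      field_simp
    have H := intervalIntegral.integral_mul_deriv_eq_deriv_mul hu hv
      ((by continuity : Continuous fun x : ℝ => ((b:ℝ)+1) * (x-1)^b).intervalIntegrable 0 1)
      ((by continuity : Continuous fun x : ℝ => x ^ a).intervalIntegrable 0 1)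
    simp only [sub_self, zero_pow (Nat.succ_ne_zero b), zero_mul, zero_sub, zero_pow,
      ne_eq] at H
    have h00 : (0:ℝ)^(a+1)/((a:ℝ)+1) = 0 := by
      rw [zero_pow (Nat.succ_ne_zero a)]; simp
    rw [h00, mul_zero, neg_zero, zero_sub] at H
    calc ∫ x in (0:ℝ)..1, x ^ a * (x - 1) ^ (b+1)
        = ∫ x in (0:ℝ)..1, (x-1)^(b+1) * x ^ a := by simp_rw [mul_comm]
      _ = - ∫ x in (0:ℝ)..1, ((b:ℝ)+1) * (x-1)^b * (x^(a+1)/((a:ℝ)+1)) := H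
      _ = -(((b:ℝ)+1)/((a:ℝ)+1)) * ∫ x in (0:ℝ)..1, x^(a+1) * (x-1)^b := by
          rw [← intervalIntegral.integral_const_mul]
          rw [← intervalIntegral.integral_neg]
          congr 1; funext x; ring
      _ = (-1)^(b+1) * (Nat.factorial a) * (Nat.factorial (b+1))
            / (Nat.factorial (a + (b+1) + 1)) := by
          rw [ih (a+1)]
          have e1 : a + 1 + b + 1 = a + (b+1) + 1 := by ring
          rw [e1]
          rw [Nat.factorial_succ a, Nat.factorial_succ b]
          have ha : ((a:ℝ)+1) ≠ 0 := by positivity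
          have hf : ((Nat.factorial (a + (b+1) + 1)):ℝ) ≠ 0 := by
            exact_mod_cast Nat.factorial_ne_zero _
          push_cast
          field_simp
          ring

noncomputable def legP (n : ℕ) : Polynomial ℝ := derivative^[n] (X^n*(X-1)^n)

lemma legendre_moment (n m : ℕ) :
    ∫ x in (0:ℝ)..1, (legP n).eval x * x^m
      = (m.descFactorial n : ℝ) * (Nat.factorial m) * (Nat.factorial n)
        / (Nat.factorial (m+n+1)) := by
  have key := poly_ibp_iter (X^n*(X-1)^n) n
    (fun j hj => legendre_aux_eval_zero n j hj) (X^m)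
  rw [iterate_derivative_X_pow_eq_C_mul] at key
  simp only [eval_pow, eval_X, eval_mul, eval_C, eval_sub, eval_one] at key
  rw [legP, key]
  have hconst : ∫ x in (0:ℝ)..1, (x^n*(x-1)^n) * ((m.descFactorial n : ℝ) * x^(m-n))
      = (m.descFactorial n : ℝ) * ∫ x in (0:ℝ)..1, x^n*(x-1)^n * x^(m-n) := by
    rw [← intervalIntegral.integral_const_mul]
    congr 1; funext x; ring
  rw [hconst]
  by_cases hmn : m < n
  · have h0 : m.descFactorial n = 0 := Nat.descFactorial_eq_zero_iff_lt.mpr hmn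
    rw [h0]
    simp
  · push_neg at hmn
    have hx : ∀ x : ℝ, x^n*(x-1)^n * x^(m-n) = x^m * (x-1)^n := by
      intro x
      rw [mul_right_comm, ← pow_add, show n + (m-n) = m by omega]
    simp_rw [hx]
    rw [beta_nat m n]
    have h1 : ((-1:ℝ))^n * (-1:ℝ)^n = 1 := by
      rw [← pow_add]; exact Even.neg_one_pow ⟨n, by ring⟩
    field_simp
    linear_combination (m.descFactorial n : ℝ) * h1

lemma legP_natDegree (n : ℕ) : (legP n).natDegree ≤ n := by
  have hd : ((X:Polynomial ℝ)-1).natDegree = 1 := by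
    simpa using natDegree_X_sub_C (1:ℝ)
  have h2 : ((((X:Polynomial ℝ)-1))^n).natDegree ≤ n :=
    le_trans natDegree_pow_le (by rw [hd, mul_one])
  have h1 : ((X:Polynomial ℝ)^n*(X-1)^n).natDegree ≤ n + n :=
    le_trans natDegree_mul_le (add_le_add (natDegree_X_pow (R := ℝ) n).le h2)
  have h3 := natDegree_iterate_derivative ((X:Polynomial ℝ)^n*(X-1)^n) n
  rw [legP]
  omega

lemma legP_coeff_top (n : ℕ) :
    (legP n).coeff n = ((2*n).descFactorial n : ℝ) := by
  rw [legP, coeff_iterate_derivative]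
  have : ((X:Polynomial ℝ)^n*(X-1)^n).coeff (n + n) = 1 := by
    rw [coeff_X_pow_mul]
    rw [show ((X:Polynomial ℝ)-1) = X + C (-1) by simp [sub_eq_add_neg]]
    rw [coeff_X_add_C_pow]
    simp
  rw [this]
  rw [show n + n = 2*n by ring]
  simp

lemma legP_coeff_sub1 (n : ℕ) (hn : 1 ≤ n) :
    (legP n).coeff (n-1) = ((2*n-1).descFactorial n : ℝ) * (-(n:ℝ)) := by
  rw [legP, coeff_iterate_derivative]
  have : ((X:Polynomial ℝ)^n*(X-1)^n).coeff (n - 1 + n) = -(n:ℝ) := by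
    rw [coeff_X_pow_mul]
    rw [show ((X:Polynomial ℝ)-1) = X + C (-1) by simp [sub_eq_add_neg]]
    rw [coeff_X_add_C_pow]
    rw [show n - (n-1) = 1 by omega, Nat.choose_symm hn, Nat.choose_one_right]
    simp
  rw [this]
  rw [show n - 1 + n = 2*n-1 by omega]
  simp [nsmul_eq_mul]

lemma SL_eq (n : ℕ) (x : ℝ) :
    shiftedLegendre n x = (Nat.factorial n : ℝ)⁻¹ * (legP n).eval x := by
  rw [_root_.shiftedLegendre, legP, one_div]
  congr 1
  have h : (fun t : ℝ => t^n*(t-1)^n) = fun t => ((X:Polynomial ℝ)^n*(X-1)^n).eval t := by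
    funext t; simp
  rw [h, iteratedDeriv_polynomial]

lemma SL_cont (n : ℕ) : Continuous (shiftedLegendre n) := by
  have h : _root_.shiftedLegendre n = fun x => (Nat.factorial n : ℝ)⁻¹ * (legP n).eval x :=
    funext (SL_eq n)
  rw [h]
  exact continuous_const.mul (legP n).continuous

lemma F_eq (n : ℕ) (t : ℝ) :
    (∫ u in (0:ℝ)..t, shiftedLegendre n u)
      = ∑ k ∈ Finset.range (n+1),
          (Nat.factorial n : ℝ)⁻¹ * (legP n).coeff k * (t^(k+1)/((k:ℝ)+1)) := by
  have hev : ∀ u : ℝ, shiftedLegendre n u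
      = ∑ k ∈ Finset.range (n+1), (Nat.factorial n : ℝ)⁻¹ * (legP n).coeff k * u^k := by
    intro u
    rw [SL_eq,
      Polynomial.eval_eq_sum_range' (lt_of_le_of_lt (legP_natDegree n) (Nat.lt_succ_self n)),
      Finset.mul_sum]
    simp [mul_assoc]
  simp_rw [hev]
  rw [intervalIntegral.integral_finset_sum]
  · refine Finset.sum_congr rfl fun k _ => ?_
    rw [intervalIntegral.integral_const_mul, integral_pow]
    rw [zero_pow (Nat.succ_ne_zero k), sub_zero]
  · intro k _
    exact Continuous.intervalIntegrable (by continuity) 0 t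

noncomputable def Hsum (m : ℕ) : ℝ := ∑ j ∈ Finset.range m, (1:ℝ)/((j:ℝ)+1)

lemma inner_pointwise (n : ℕ) (x t : ℝ) (ht : t ≠ x) :
    ((∫ u in (0:ℝ)..x, shiftedLegendre n u) - ∫ u in (0:ℝ)..t, shiftedLegendre n u) / (x - t)
      = ∑ k ∈ Finset.range (n+1), (Nat.factorial n : ℝ)⁻¹ * (legP n).coeff k / ((k:ℝ)+1)
          * ∑ i ∈ Finset.range (k+1), x^i * t^(k-i) := by
  have hxt : x - t ≠ 0 := sub_ne_zero.mpr (Ne.symm ht)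
  rw [div_eq_iff hxt, F_eq, F_eq, ← Finset.sum_sub_distrib, Finset.sum_mul]
  refine Finset.sum_congr rfl fun k _ => ?_
  have hg := geom_sum₂_mul x t (k+1)
  simp only [Nat.add_sub_cancel] at hg
  have hk : ((k:ℝ)+1) ≠ 0 := by positivity
  have hf : (Nat.factorial n : ℝ) ≠ 0 := by exact_mod_cast Nat.factorial_ne_zero n
  field_simp
  linear_combination (-(legP n).coeff k) * hg

lemma inner_eq (n : ℕ) (x : ℝ) :
    (∫ t in (0:ℝ)..x,
        ((∫ u in (0:ℝ)..x, shiftedLegendre n u) - ∫ u in (0:ℝ)..t, shiftedLegendre n u)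
          / (x - t))
      = ∑ k ∈ Finset.range (n+1),
          (Nat.factorial n : ℝ)⁻¹ * (legP n).coeff k / ((k:ℝ)+1) * (Hsum (k+1) * x^(k+1)) := by
  have hae : ∀ᵐ (t:ℝ), t ≠ x := by
    rw [MeasureTheory.ae_iff]
    simp only [ne_eq, not_not]
    rw [show {a : ℝ | a = x} = {x} by ext a; simp]
    exact MeasureTheory.measure_singleton x
  have step1 : (∫ t in (0:ℝ)..x,
        ((∫ u in (0:ℝ)..x, shiftedLegendre n u) - ∫ u in (0:ℝ)..t, shiftedLegendre n u)
          / (x - t))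
      = ∫ t in (0:ℝ)..x, ∑ k ∈ Finset.range (n+1),
          (Nat.factorial n : ℝ)⁻¹ * (legP n).coeff k / ((k:ℝ)+1)
            * ∑ i ∈ Finset.range (k+1), x^i * t^(k-i) := by
    apply intervalIntegral.integral_congr_ae
    filter_upwards [hae] with t ht _
    exact inner_pointwise n x t ht
  rw [step1, intervalIntegral.integral_finset_sum]
  · refine Finset.sum_congr rfl fun k _ => ?_
    rw [intervalIntegral.integral_const_mul]
    congr 1
    rw [intervalIntegral.integral_finset_sum]
    · have : ∀ i ∈ Finset.range (k+1),
          (∫ t in (0:ℝ)..x, x^i * t^(k-i))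
            = x^(k+1) * ((1:ℝ)/((k-i:ℕ)+1)) := by
        intro i hi
        have hik : i ≤ k := Nat.lt_succ_iff.mp (Finset.mem_range.mp hi)
        rw [intervalIntegral.integral_const_mul, integral_pow,
          zero_pow (Nat.succ_ne_zero _), sub_zero]
        rw [show x^i * (x^(k-i+1)/((k-i:ℕ)+1)) = x^i * x^(k-i+1) * (1/((k-i:ℕ)+1)) by ring,
          ← pow_add, show i + (k-i+1) = k+1 by omega]
      rw [Finset.sum_congr rfl this, ← Finset.mul_sum, mul_comm]
      congr 1
      rw [Hsum]
      have := Finset.sum_range_reflect (fun j => (1:ℝ)/((j:ℝ)+1)) (k+1)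
      simp only [Nat.add_sub_cancel] at this
      exact this
    · intro i _
      exact Continuous.intervalIntegrable (by continuity) 0 x
  · intro k _
    apply Continuous.intervalIntegrable
    exact continuous_const.mul (continuous_finset_sum _ fun i _ =>
      continuous_const.mul (continuous_pow _))

lemma SL_moment (n m : ℕ) :
    ∫ x in (0:ℝ)..1, shiftedLegendre n x * x^m
      = (Nat.factorial n : ℝ)⁻¹ * ((m.descFactorial n : ℝ) * (Nat.factorial m)
          * (Nat.factorial n) / (Nat.factorial (m+n+1))) := by
  have h : ∀ x:ℝ, shiftedLegendre n x * x ^ m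
      = (Nat.factorial n : ℝ)⁻¹ * ((legP n).eval x * x^m) := by
    intro x; rw [SL_eq]; ring
  simp_rw [h]
  rw [intervalIntegral.integral_const_mul, legendre_moment]

theorem stmt15 (n : ℕ) :
    ∫ x in (0:ℝ)..1, shiftedLegendre n x *
        (∫ t in (0:ℝ)..x,
          ((∫ u in (0:ℝ)..x, shiftedLegendre n u) - ∫ u in (0:ℝ)..t, shiftedLegendre n u)
            / (x - t)) =
      1 / ((2 * (n : ℝ) + 1) * (2 * (n : ℝ) + 2)) := by
  have hinner : ∀ x : ℝ, shiftedLegendre n x *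
      (∫ t in (0:ℝ)..x,
        ((∫ u in (0:ℝ)..x, shiftedLegendre n u) - ∫ u in (0:ℝ)..t, shiftedLegendre n u)
          / (x - t))
      = ∑ k ∈ Finset.range (n+1),
          ((Nat.factorial n : ℝ)⁻¹ * (legP n).coeff k / ((k:ℝ)+1) * Hsum (k+1))
            * (shiftedLegendre n x * x^(k+1)) := by
    intro x
    rw [inner_eq, Finset.mul_sum]
    exact Finset.sum_congr rfl fun k _ => by ring
  rw [intervalIntegral.integral_congr (fun x _ => hinner x)]
  rw [intervalIntegral.integral_finset_sum (fun k _ =>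
    (continuous_const.fun_mul ((SL_cont n).fun_mul (continuous_pow _))).intervalIntegrable 0 1)]
  simp_rw [intervalIntegral.integral_const_mul, SL_moment]
  rcases Nat.eq_zero_or_pos n with hn | hn
  · subst hn
    norm_num [legP, Hsum]
  · -- n ≥ 1 : split off the top two terms, the rest vanish
    obtain ⟨p, hp⟩ : ∃ p, n = p + 1 := ⟨n - 1, by omega⟩
    subst hp
    rw [Finset.sum_range_succ, Finset.sum_range_succ]
    have hzero : ∀ k ∈ Finset.range p,
        ((Nat.factorial (p+1) : ℝ)⁻¹ * (legP (p+1)).coeff k / ((k:ℝ)+1) * Hsum (k+1))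
          * ((Nat.factorial (p+1) : ℝ)⁻¹ * (((k+1).descFactorial (p+1) : ℝ)
            * (Nat.factorial (k+1)) * (Nat.factorial (p+1)) / (Nat.factorial (k+1+(p+1)+1)))) = 0 := by
      intro k hk
      have hlt : k + 1 < p + 1 := by
        have := Finset.mem_range.mp hk; omega
      rw [Nat.descFactorial_eq_zero_iff_lt.mpr hlt]
      simp
    rw [Finset.sum_eq_zero hzero, zero_add]
    have hA : (Nat.factorial p : ℝ) ≠ 0 := by exact_mod_cast Nat.factorial_ne_zero p
    have hB : (Nat.factorial (2*p+1) : ℝ) ≠ 0 := by exact_mod_cast Nat.factorial_ne_zero _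
    have hc1 : (legP (p+1)).coeff p
        = ((2*p+1).descFactorial (p+1) : ℝ) * (-((p:ℝ)+1)) := by
      have h := legP_coeff_sub1 (p+1) (by omega)
      rw [show (p+1)-1 = p by omega, show 2*(p+1)-1 = 2*p+1 by omega] at h
      rw [h]; push_cast; ring
    have hc2 : (legP (p+1)).coeff (p+1) = ((2*p+2).descFactorial (p+1) : ℝ) := by
      have h := legP_coeff_top (p+1)
      rw [show 2*(p+1) = 2*p+2 by omega] at h
      exact h
    have hd1 : ((2*p+1).descFactorial (p+1) : ℝ) * (Nat.factorial p : ℝ)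
        = ((2*p+1).factorial : ℝ) := by
      have h := Nat.factorial_mul_descFactorial (show p+1 ≤ 2*p+1 by omega)
      rw [show 2*p+1-(p+1) = p by omega] at h
      exact_mod_cast congrArg (Nat.cast (R := ℝ)) (by rw [mul_comm] at h; exact h)
    have hd2 : ((2*p+2).descFactorial (p+1) : ℝ) * (Nat.factorial (p+1) : ℝ)
        = ((2*p+2).factorial : ℝ) := by
      have h := Nat.factorial_mul_descFactorial (show p+1 ≤ 2*p+2 by omega)
      rw [show 2*p+2-(p+1) = p+1 by omega] at h
      exact_mod_cast congrArg (Nat.cast (R := ℝ)) (by rw [mul_comm] at h; exact h)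
    have hd3 : ((p+1).descFactorial (p+1) : ℝ) = ((p+1).factorial : ℝ) := by
      rw [Nat.descFactorial_self]
    have hd4 : ((p+2).descFactorial (p+1) : ℝ) = ((p+2).factorial : ℝ) := by
      have h := Nat.factorial_mul_descFactorial (show p+1 ≤ p+2 by omega)
      rw [show p+2-(p+1) = 1 by omega, Nat.factorial_one, one_mul] at h
      exact_mod_cast congrArg (Nat.cast (R := ℝ)) h
    have hH : Hsum (p+2) = Hsum (p+1) + 1/((p:ℝ)+2) := by
      rw [Hsum, Hsum, Finset.sum_range_succ]
      push_cast; ring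
    have hf1 : ((p+1).factorial : ℝ) = ((p:ℝ)+1) * (Nat.factorial p : ℝ) := by
      rw [Nat.factorial_succ]; push_cast; ring
    have hf2 : ((p+2).factorial : ℝ) = ((p:ℝ)+2) * ((p+1).factorial : ℝ) := by
      rw [show p+2 = (p+1)+1 by omega, Nat.factorial_succ]; push_cast; ring
    have hf3 : ((2*p+2).factorial : ℝ) = (2*(p:ℝ)+2) * ((2*p+1).factorial : ℝ) := by
      rw [show 2*p+2 = (2*p+1)+1 by omega, Nat.factorial_succ]; push_cast; ring
    have hf4 : ((2*p+3).factorial : ℝ) = (2*(p:ℝ)+3) * ((2*p+2).factorial : ℝ) := by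
      rw [show 2*p+3 = (2*p+2)+1 by omega, Nat.factorial_succ]; push_cast; ring
    have hf5 : ((2*p+4).factorial : ℝ) = (2*(p:ℝ)+4) * ((2*p+3).factorial : ℝ) := by
      rw [show 2*p+4 = (2*p+3)+1 by omega, Nat.factorial_succ]; push_cast; ring
    have hD1 : ((2*p+1).descFactorial (p+1) : ℝ)
        = ((2*p+1).factorial : ℝ) / (Nat.factorial p : ℝ) := by
      field_simp [← hd1]
      exact hd1
    have hD2 : ((2*p+2).descFactorial (p+1) : ℝ)
        = ((2*p+2).factorial : ℝ) / ((p+1).factorial : ℝ) := by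
      have hA1 : ((p+1).factorial : ℝ) ≠ 0 := by exact_mod_cast Nat.factorial_ne_zero _
      field_simp [← hd2]
      exact hd2
    rw [show p+1+(p+1)+1 = 2*p+3 by omega, show p+1+1+(p+1)+1 = 2*p+4 by omega,
      show p+1+1 = p+2 by omega] at *
    rw [hc1, hc2, hd3, hd4, hH, hD1, hD2, hf5, hf4, hf3, hf2, hf1]
    have h1 : ((p:ℝ)+1) ≠ 0 := by positivity
    have h2 : ((p:ℝ)+2) ≠ 0 := by positivity
    have h3 : (2*(p:ℝ)+2) ≠ 0 := by positivity
    have h4 : (2*(p:ℝ)+3) ≠ 0 := by positivity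
    have h5 : (2*(p:ℝ)+4) ≠ 0 := by positivity
    push_cast
    field_simp
    ring
end

section
/- Let m, n ≥ 1 be natural numbers and let r be any natural number. Then (n+1)·S(m,n,r) − (n−1)·S(m−1,n−1,r) = (m+1)·S(n,m,r) − (m−1)·S(n−1,m−1,r), where S(m,n,r) denotes the coefficient of x^{r+1} in the polynomial p_m(x)·q_{n+1}(x) and q_{n+1}(x) = ∫₀ˣ p_n(t) dt. -/
open Polynomial


lemma leibAux (a b : ℝ) (f : Polynomial ℝ) (k : ℕ) :
    derivative^[k + 1] ((C a * X + C b) * f) =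
      (C a * X + C b) * derivative^[k + 1] f + C (a * (k + 1)) * derivative^[k] f := by
  induction k with
  | zero =>
    simp only [Function.iterate_one, Function.iterate_zero_apply, derivative_mul]
    push_cast
    simp
    ring
  | succ k ih =>
    have h1 : derivative^[k + 1 + 1] ((C a * X + C b) * f)
        = derivative (derivative^[k + 1] ((C a * X + C b) * f)) :=
      Function.iterate_succ_apply' _ _ _
    have h2 : derivative^[k + 1 + 1] f = derivative (derivative^[k + 1] f) :=
      Function.iterate_succ_apply' _ _ _
    have h3 : derivative^[k + 1] f = derivative (derivative^[k] f) :=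
      Function.iterate_succ_apply' _ _ _
    rw [h1, ih, h2, h3]
    simp only [derivative_add, derivative_mul, derivative_C, derivative_X]
    push_cast
    simp only [map_add, map_mul, map_one]
    ring

lemma leib (a b : ℝ) (f : Polynomial ℝ) (k : ℕ) :
    derivative^[k] ((C a * X + C b) * f) =
      (C a * X + C b) * derivative^[k] f + C (a * k) * derivative^[k - 1] f := by
  cases k with
  | zero => simp
  | succ k => rw [leibAux]; push_cast; simp

lemma leib2 (f : Polynomial ℝ) (k : ℕ) :
    derivative^[k] ((X ^ 2 - X) * f) =
      (X ^ 2 - X) * derivative^[k] f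
        + C (k : ℝ) * ((C 2 * X + C (-1)) * derivative^[k - 1] f)
        + C ((k : ℝ) * ((k - 1 : ℕ) : ℝ)) * derivative^[k - 2] f := by
  have h : (X ^ 2 - X : Polynomial ℝ) * f = (C 1 * X + C 0) * ((C 1 * X + C (-1)) * f) := by
    simp only [map_one, map_neg, map_zero]
    ring
  rw [h, leib, leib 1 (-1) f k, leib 1 (-1) f (k - 1), show k - 1 - 1 = k - 2 by omega]
  simp only [map_one, map_neg, map_zero, map_mul, one_mul, map_ofNat]
  ring

lemma fd (n : ℕ) : derivative (X ^ (n+1) * (X - 1) ^ (n+1) : Polynomial ℝ)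
    = C ((n : ℝ) + 1) * ((C 2 * X + C (-1)) * (X ^ n * (X - 1) ^ n)) := by
  have h1 : derivative (X ^ (n+1) : Polynomial ℝ) = C ((n:ℝ)+1) * X ^ n := by
    rw [derivative_X_pow]; push_cast; simp [map_add, map_one, map_natCast]
  have h2 : derivative ((X - 1) ^ (n+1) : Polynomial ℝ) = C ((n:ℝ)+1) * (X - 1) ^ n := by
    rw [derivative_pow]; push_cast
    simp [map_add, map_one, map_natCast]
  rw [derivative_mul, h1, h2]
  have hx : (X : Polynomial ℝ) - 1 = C 1 * X + C (-1) := by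
    simp only [map_one, map_neg]; ring
  rw [hx]
  simp only [map_neg, map_one, map_ofNat]
  ring

lemma Rf1 (n : ℕ) :
    derivative^[n+2] (X^(n+1) * (X-1)^(n+1) : Polynomial ℝ) =
      C ((n:ℝ)+1) * ((C 2 * X + C (-1)) * derivative^[n+1] (X^n*(X-1)^n)
        + C (2*((n:ℝ)+1)) * derivative^[n] (X^n*(X-1)^n)) := by
  rw [show n+2 = (n+1)+1 from rfl, Function.iterate_succ_apply, fd,
    iterate_derivative_C_mul, leibAux 2 (-1) _ n]

lemma Rf2 (n : ℕ) :
    derivative^[n+1] (X^(n+1) * (X-1)^(n+1) : Polynomial ℝ) =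
      C ((n:ℝ)+1) * ((C 2 * X + C (-1)) * derivative^[n] (X^n*(X-1)^n)
        + C (2*(n:ℝ)) * derivative^[n-1] (X^n*(X-1)^n)) := by
  rw [Function.iterate_succ_apply, fd, iterate_derivative_C_mul, leib 2 (-1) _ n]

lemma Rf3 (n : ℕ) :
    derivative^[n+1] (X^(n+1) * (X-1)^(n+1) : Polynomial ℝ) =
      (X^2 - X) * derivative^[n+1] (X^n*(X-1)^n)
        + C ((n:ℝ)+1) * ((C 2 * X + C (-1)) * derivative^[n] (X^n*(X-1)^n))
        + C (((n:ℝ)+1)*(n:ℝ)) * derivative^[n-1] (X^n*(X-1)^n) := by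
  have h : (X^(n+1) * (X-1)^(n+1) : Polynomial ℝ) = (X^2 - X) * (X^n * (X-1)^n) := by ring
  rw [h, leib2, show n+1-1 = n by omega, show n+1-2 = n-1 by omega]
  push_cast
  ring

lemma Af (n : ℕ) :
    (X^2 - X : Polynomial ℝ) * derivative^[n+1] (X^n*(X-1)^n) =
      C ((n:ℝ)*((n:ℝ)+1)) * derivative^[n-1] (X^n*(X-1)^n) := by
  have h2 := Rf2 n
  have h3 := Rf3 n
  simp only [map_mul, map_add, map_one, map_ofNat, map_neg] at h2 h3 ⊢
  linear_combination h2 - h3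

/-- The shifted Legendre polynomial `pₙ(x) = (1/n!) dⁿ/dxⁿ (xⁿ(x-1)ⁿ)`, as a polynomial. -/
noncomputable def shiftedLegendrePoly (n : ℕ) : Polynomial ℝ :=
  C ((Nat.factorial n : ℝ))⁻¹ * (derivative^[n] (X ^ n * (X - 1) ^ n))

/-- The integrated shifted Legendre polynomial `q_{n+1}(x) = ∫₀ˣ pₙ(t) dt`. -/
noncomputable def qPoly (n : ℕ) : Polynomial ℝ :=
  ∑ k ∈ Finset.range (n + 1), C ((shiftedLegendrePoly n).coeff k / ((k : ℝ) + 1)) * X ^ (k + 1)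


lemma P_natDegree_le (n : ℕ) : (shiftedLegendrePoly n).natDegree ≤ n := by
  unfold shiftedLegendrePoly
  refine (natDegree_C_mul_le _ _).trans ?_
  refine (natDegree_iterate_derivative _ _).trans ?_
  have h2 : ((X - 1 : Polynomial ℝ) ^ n).natDegree ≤ n := by
    refine natDegree_pow_le.trans ?_
    have : (X - 1 : Polynomial ℝ).natDegree ≤ 1 :=
      (natDegree_sub_le _ _).trans (by simp)
    nlinarith
  have h1 : (X ^ n : Polynomial ℝ).natDegree ≤ n := by simp
  have : (X ^ n * (X - 1) ^ n : Polynomial ℝ).natDegree ≤ n + n :=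
    (natDegree_mul_le).trans (by omega)
  omega

lemma deriv_qPoly (n : ℕ) : derivative (qPoly n) = shiftedLegendrePoly n := by
  have hdeg : (shiftedLegendrePoly n).natDegree < n + 1 := Nat.lt_succ_of_le (P_natDegree_le n)
  conv_rhs => rw [(shiftedLegendrePoly n).as_sum_range' (n+1) hdeg]
  unfold qPoly
  rw [derivative_sum]
  refine Finset.sum_congr rfl fun k _ => ?_
  rw [derivative_C_mul, derivative_X_pow]
  rw [← mul_assoc, ← C_mul]
  push_cast
  rw [div_mul_cancel₀ _ (by positivity : ((k:ℝ) + 1) ≠ 0),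
    C_mul_X_pow_eq_monomial]

lemma coeff0_qPoly (n : ℕ) : (qPoly n).coeff 0 = 0 := by
  unfold qPoly
  rw [finset_sum_coeff]
  refine Finset.sum_eq_zero fun k _ => ?_
  rw [coeff_C_mul, coeff_X_pow]
  simp

lemma poly_eq_of (p q : Polynomial ℝ) (h1 : derivative p = derivative q)
    (h2 : p.coeff 0 = q.coeff 0) : p = q := by
  have hd : derivative (p - q) = 0 := by rw [derivative_sub, h1, sub_self]
  have := eq_C_of_derivative_eq_zero hd
  have h0 : (p - q).coeff 0 = 0 := by rw [coeff_sub, h2, sub_self]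
  rw [h0, map_zero] at this
  exact sub_eq_zero.mp this

lemma Qrep (n : ℕ) : qPoly (n+1) =
    C ((Nat.factorial (n+1) : ℝ))⁻¹ * derivative^[n] (X ^ (n+1) * (X - 1) ^ (n+1)) := by
  apply poly_eq_of
  · rw [deriv_qPoly, derivative_C_mul, ← Function.iterate_succ_apply' derivative n]
    rfl
  · rw [coeff0_qPoly, coeff_C_mul, coeff_iterate_derivative]
    have : (X ^ (n+1) * (X - 1) ^ (n+1) : Polynomial ℝ).coeff (0 + n) = 0 := by
      rw [mul_comm, coeff_mul_X_pow']
      simp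
    rw [this]
    simp

lemma dP (n : ℕ) : derivative (shiftedLegendrePoly n)
    = C ((Nat.factorial n : ℝ))⁻¹ * derivative^[n+1] (X ^ n * (X - 1) ^ n) := by
  unfold shiftedLegendrePoly
  rw [derivative_C_mul, ← Function.iterate_succ_apply' derivative n]

lemma hcC (n : ℕ) : C ((Nat.factorial (n+1) : ℝ))⁻¹ * C ((n:ℝ)+1)
    = C ((Nat.factorial n : ℝ))⁻¹ := by
  rw [← C_mul]
  congr 1
  rw [Nat.factorial_succ]
  push_cast
  have h1 : ((n:ℝ)+1) ≠ 0 := by positivity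
  have h2 : ((Nat.factorial n : ℝ)) ≠ 0 := by positivity
  field_simp

lemma Aq (n : ℕ) : C ((n:ℝ)*((n:ℝ)+1)) * qPoly n
    = (X^2 - X) * derivative (shiftedLegendrePoly n) := by
  cases n with
  | zero =>
    simp only [Nat.cast_zero, zero_mul, map_zero, zero_mul]
    have : derivative (shiftedLegendrePoly 0) = 0 := by
      unfold shiftedLegendrePoly
      simp
    rw [this, mul_zero]
  | succ k =>
    rw [Qrep k, dP (k+1)]
    have hAf := Af (k+1)
    rw [show k+1-1 = k by omega] at hAf
    push_cast at hAf ⊢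
    -- goal : C ((k+1)*(k+2)) * (C ((k+1)!⁻¹) * D^k f) = (X^2-X) * (C ((k+1)!⁻¹) * D^{k+3}... )
    calc C (((k:ℝ)+1)*((k:ℝ)+1+1)) * (C ((Nat.factorial (k+1) : ℝ))⁻¹ *
            derivative^[k] (X ^ (k+1) * (X - 1) ^ (k+1)))
        = C ((Nat.factorial (k+1) : ℝ))⁻¹ * (C (((k:ℝ)+1)*(((k:ℝ)+1)+1)) *
            derivative^[k] (X ^ (k+1) * (X - 1) ^ (k+1))) := by ring_nf
      _ = C ((Nat.factorial (k+1) : ℝ))⁻¹ * ((X^2 - X) *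
            derivative^[k+1+1] (X ^ (k+1) * (X - 1) ^ (k+1))) := by rw [← hAf]
      _ = (X^2 - X) * (C ((Nat.factorial (k+1) : ℝ))⁻¹ *
            derivative^[k+1+1] (X ^ (k+1) * (X - 1) ^ (k+1))) := by ring

lemma R1q (n : ℕ) : derivative (shiftedLegendrePoly (n+1))
    = (C 2 * X + C (-1)) * derivative (shiftedLegendrePoly n)
      + C (2*((n:ℝ)+1)) * shiftedLegendrePoly n := by
  rw [dP (n+1), dP n, Rf1 n]
  unfold shiftedLegendrePoly
  rw [← hcC n]
  ring

lemma recC (n : ℕ) : C ((n:ℝ)+1) * shiftedLegendrePoly (n+1)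
    = C ((n:ℝ)+1) * ((C 2 * X + C (-1)) * shiftedLegendrePoly n)
      + C 2 * ((X^2 - X) * derivative (shiftedLegendrePoly n)) := by
  rw [dP n]
  unfold shiftedLegendrePoly
  rw [Rf2 n, ← hcC n]
  have hAf := Af n
  simp only [map_mul, map_add, map_one, map_ofNat, map_neg] at hAf ⊢
  linear_combination (-(2 * (C ((Nat.factorial (n+1) : ℝ))⁻¹ * (C (n:ℝ) + 1)))) * hAf

lemma keyPoly (k j : ℕ) :
    C ((k:ℝ)+1) * shiftedLegendrePoly (k+1) * derivative (shiftedLegendrePoly (j+1))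
      - C ((j:ℝ)+1) * shiftedLegendrePoly (j+1) * derivative (shiftedLegendrePoly (k+1))
    = C ((k:ℝ)+1) * shiftedLegendrePoly k * derivative (shiftedLegendrePoly j)
      - C ((j:ℝ)+1) * shiftedLegendrePoly j * derivative (shiftedLegendrePoly k) := by
  have hk := recC k
  have hj := recC j
  have h1k := R1q k
  have h1j := R1q j
  simp only [map_mul, map_add, map_one, map_ofNat, map_neg] at hk hj h1k h1j ⊢
  linear_combination (derivative (shiftedLegendrePoly (j+1))) * hk
    - (derivative (shiftedLegendrePoly (k+1))) * hj
    + ((C (k:ℝ) + 1) * ((2*X + -1) * shiftedLegendrePoly k)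
        + 2*((X^2-X) * derivative (shiftedLegendrePoly k))) * h1j
    - ((C (j:ℝ) + 1) * ((2*X + -1) * shiftedLegendrePoly j)
        + 2*((X^2-X) * derivative (shiftedLegendrePoly j))) * h1k

/-- `S m n r` is the coefficient of `x^(r+1)` in `p_m(x) * q_{n+1}(x)`. -/
noncomputable def S (m n r : ℕ) : ℝ := (shiftedLegendrePoly m * qPoly n).coeff (r + 1)


lemma bigPoly (k j : ℕ) :
    C (((k:ℝ)+1)*((j:ℝ)+1)) * ( C ((j:ℝ)+2) * (shiftedLegendrePoly (k+1) * qPoly (j+1))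
      - C (j:ℝ) * (shiftedLegendrePoly k * qPoly j)
      - C ((k:ℝ)+2) * (shiftedLegendrePoly (j+1) * qPoly (k+1))
      + C (k:ℝ) * (shiftedLegendrePoly j * qPoly k) ) = 0 := by
  have hA1 := Aq (j+1)
  have hA2 := Aq j
  have hA3 := Aq (k+1)
  have hA4 := Aq k
  have hkey := keyPoly k j
  push_cast at hA1 hA3
  simp only [map_mul, map_add, map_one, map_ofNat, map_neg] at hA1 hA2 hA3 hA4 hkey ⊢
  linear_combination ((C (k:ℝ) + 1) * shiftedLegendrePoly (k+1)) * hA1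
    - ((C (k:ℝ) + 1) * shiftedLegendrePoly k) * hA2
    - ((C (j:ℝ) + 1) * shiftedLegendrePoly (j+1)) * hA3
    + ((C (j:ℝ) + 1) * shiftedLegendrePoly j) * hA4
    + (X^2 - X) * hkey

lemma bigPoly' (k j : ℕ) :
    C ((j:ℝ)+2) * (shiftedLegendrePoly (k+1) * qPoly (j+1))
      - C (j:ℝ) * (shiftedLegendrePoly k * qPoly j)
      - C ((k:ℝ)+2) * (shiftedLegendrePoly (j+1) * qPoly (k+1))
      + C (k:ℝ) * (shiftedLegendrePoly j * qPoly k) = 0 := by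
  have h := bigPoly k j
  have hc : (C (((k:ℝ)+1)*((j:ℝ)+1)) : Polynomial ℝ) ≠ 0 := by
    rw [Ne, C_eq_zero]
    positivity
  exact (mul_eq_zero.mp h).resolve_left hc

theorem stmt17 (m n : ℕ) (hm : 1 ≤ m) (hn : 1 ≤ n) (r : ℕ) :
    ((n : ℝ) + 1) * S m n r - ((n : ℝ) - 1) * S (m - 1) (n - 1) r =
      ((m : ℝ) + 1) * S n m r - ((m : ℝ) - 1) * S (n - 1) (m - 1) r := by
  obtain ⟨k, rfl⟩ : ∃ k, m = k + 1 := ⟨m - 1, by omega⟩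
  obtain ⟨j, rfl⟩ : ∃ j, n = j + 1 := ⟨n - 1, by omega⟩
  simp only [Nat.add_sub_cancel]
  have h0 := congrArg (fun p => Polynomial.coeff p (r+1)) (bigPoly' k j)
  simp only [coeff_add, coeff_sub, coeff_C_mul, coeff_zero] at h0
  unfold S
  push_cast
  linarith [h0]
end
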